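/- Let G be a finite simple graph with chromatic number χ(G), and let K be a clique of size k in G. If χ(G \ K) ≤ χ(G) − k − 1 is false, i.e., suppose χ(G \ K) = χ(G) − k (K is 'not Tihany'), then in every proper (χ(G)−k)-coloring of G \ K, every color class contains a vertex adjacent to all vertices of K. -/

import Mathlib

open SimpleGraph

/-- If a clique `K` of size `k` is "not Tihany", i.e. `χ(G \ K) = χ(G) - k`, then every color
class of every proper `(χ(G)-k)`-coloring of `G \ K` contains a vertex complete to `K`. -/
theorem stmt0 {V : Type*} [Fintype V] (G : SimpleGraph V)
    (n k : ℕ) (hn : G.chromaticNumber = n)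
    (K : Finset V) (hK : G.IsClique (↑K : Set V)) (hk : K.card = k)
    (hnt : (G.induce ((↑K : Set V)ᶜ)).chromaticNumber = ((n - k : ℕ) : ℕ∞))
    (c : (G.induce ((↑K : Set V)ᶜ)).Coloring (Fin (n - k))) (i : Fin (n - k)) :
    ∃ v : ((↑K : Set V)ᶜ : Set V), c v = i ∧ ∀ u ∈ K, G.Adj (↑v) u := by
  classical
  by_contra hno
  push_neg at hno
  -- for every vertex in class i, choose a non-neighbor in K
  have hchoice : ∀ v : ((↑K : Set V)ᶜ : Set V), c v = i → ∃ u, u ∈ K ∧ ¬ G.Adj (↑v) u := by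
    intro v hv
    obtain ⟨u, hu, hadj⟩ := hno v hv
    exact ⟨u, hu, hadj⟩
  choose u hu hadj using hchoice
  -- build a coloring of G with (n-k-1) + k colors
  have mem : ∀ v : V, v ∉ K → v ∈ ((↑K : Set V)ᶜ : Set V) := fun v hv => hv
  let f : V → ({j : Fin (n - k) // j ≠ i} ⊕ ((K : Set V) : Type _)) := fun v =>
    if hv : v ∈ K then Sum.inr ⟨v, hv⟩
    else if hi : c ⟨v, mem v hv⟩ = i then Sum.inr ⟨u ⟨v, mem v hv⟩ hi, hu _ hi⟩
    else Sum.inl ⟨c ⟨v, mem v hv⟩, hi⟩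
  have hf : ∀ {v w : V}, G.Adj v w → f v ≠ f w := by
    intro v w hvw heq
    by_cases hv : v ∈ K <;> by_cases hw : w ∈ K
    · simp only [f, dif_pos hv, dif_pos hw] at heq
      exact G.ne_of_adj hvw (congrArg Subtype.val (Sum.inr.inj heq))
    · simp only [f, dif_pos hv, dif_neg hw] at heq
      by_cases hi : c ⟨w, mem w hw⟩ = i
      · rw [dif_pos hi] at heq
        have h2 : v = u ⟨w, mem w hw⟩ hi := congrArg Subtype.val (Sum.inr.inj heq)
        exact hadj _ hi (by rw [← h2]; exact hvw.symm)
      · rw [dif_neg hi] at heq; exact Sum.inr_ne_inl heq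
    · simp only [f, dif_neg hv, dif_pos hw] at heq
      by_cases hi : c ⟨v, mem v hv⟩ = i
      · rw [dif_pos hi] at heq
        have h2 : u ⟨v, mem v hv⟩ hi = w := congrArg Subtype.val (Sum.inr.inj heq)
        exact hadj _ hi (by rw [h2]; exact hvw)
      · rw [dif_neg hi] at heq; exact Sum.inl_ne_inr heq
    · have hadj' : (G.induce ((↑K : Set V)ᶜ)).Adj ⟨v, mem v hv⟩ ⟨w, mem w hw⟩ := hvw
      have hne : c ⟨v, mem v hv⟩ ≠ c ⟨w, mem w hw⟩ := c.valid hadj'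
      simp only [f, dif_neg hv, dif_neg hw] at heq
      by_cases hi : c ⟨v, mem v hv⟩ = i <;> by_cases hj : c ⟨w, mem w hw⟩ = i
      · exact hne (hi.trans hj.symm)
      · rw [dif_pos hi, dif_neg hj] at heq; exact Sum.inr_ne_inl heq
      · rw [dif_neg hi, dif_pos hj] at heq; exact Sum.inl_ne_inr heq
      · rw [dif_neg hi, dif_neg hj] at heq
        exact hne (congrArg Subtype.val (Sum.inl.inj heq))
  let C := Coloring.mk f hf
  have hcard : Fintype.card ({j : Fin (n - k) // j ≠ i} ⊕ ((K : Set V) : Type _)) = (n - k - 1) + k := by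
    rw [Fintype.card_sum]
    congr 1
    · have : Fintype.card {j : Fin (n - k) // j ≠ i} = Fintype.card (Fin (n-k)) - Fintype.card {j : Fin (n-k) // j = i} := Fintype.card_subtype_compl _
      rw [this, Fintype.card_subtype_eq, Fintype.card_fin]
    · simp [hk]
  have hcol : G.Colorable ((n - k - 1) + k) := hcard ▸ C.colorable
  have hle : G.chromaticNumber ≤ ((n - k - 1) + k : ℕ) := hcol.chromaticNumber_le
  have hpos : 0 < n - k := i.pos
  have heq2 : (n - k - 1) + k = n - 1 := by omega
  rw [hn, heq2] at hle
  have : n ≤ n - 1 := by exact_mod_cast hle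
  omega
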